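/- arXiv:2112.04989 — 2 statements merged into one kernel-verified Lean document; each statement's English description precedes it below -/
import Mathlib

section
/- Let m ≥ 1 and let U_1,…,U_{q+1} be nonzero 𝔽_q-subspaces of 𝔽_{q^m}² with dimensions n_1 ≥ n_2 ≥ … ≥ n_{q+1} ≥ 1, such that Σ_{i=1}^{q+1} dim_{𝔽_q}(U_i ∩ S) = 1 for every one-dimensional 𝔽_{q^m}-subspace S of 𝔽_{q^m}² (i.e., the associated 2-dimensional code with q+1 blocks is a one-weight maximum sum-rank distance code). Then either (1) n_1 = n_2 = … = n_{q−1} = m and n_q = n_{q+1} = 1, or (2) q = 2 and n_1 = n_2 = m − 1, n_3 = 2. -/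
open Finset

open Finset

lemma sum_all_eq_of_le {α : Type*} (s : Finset α) (f : α → ℕ) (M : ℕ)
    (hle : ∀ x ∈ s, f x ≤ M) (hsum : ∑ x ∈ s, f x = s.card * M) :
    ∀ x ∈ s, f x = M := by
  by_contra h
  push_neg at h
  obtain ⟨x, hx, hne⟩ := h
  have hlt : ∑ y ∈ s, f y < ∑ y ∈ s, M :=
    Finset.sum_lt_sum hle ⟨x, hx, lt_of_le_of_ne (hle x hx) hne⟩
  rw [Finset.sum_const, smul_eq_mul, hsum] at hlt
  exact lt_irrefl _ hlt

lemma arith_main (q m : ℕ) (hq2 : 2 ≤ q) (hm1 : 1 ≤ m) (n : Fin (q+1) → ℕ)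
    (hanti : Antitone n) (hn1 : ∀ i, 1 ≤ n i)
    (hsum : ∑ i, q ^ n i = (q ^ m + 1) * (q - 1) + (q + 1)) :
    ((∀ i : Fin (q + 1), (i : ℕ) < q - 1 → n i = m) ∧
      (∀ i : Fin (q + 1), q - 1 ≤ (i : ℕ) → n i = 1))
    ∨ (q = 2 ∧
        (∀ i : Fin (q + 1), (i : ℕ) < 2 → n i = m - 1) ∧
        (∀ i : Fin (q + 1), (i : ℕ) = 2 → n i = 2)) := by
  classical
  have hq0 : 0 < q := by omega
  have hq1 : 1 < q := hq2
  -- rewrite RHS: (q^m+1)*(q-1) + (q+1) = (q-1)*q^m + 2*q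
  have hrhs : (q ^ m + 1) * (q - 1) + (q + 1) = (q - 1) * q ^ m + 2 * q := by
    have : 1 ≤ q := by omega
    cases' Nat.exists_eq_add_of_le hq2 with p hp
    subst hp
    ring_nf
    omega
  rw [hrhs] at hsum
  -- every n i ≤ m
  have hqm0 : 0 < q ^ m := Nat.pow_pos hq0
  have hnm : ∀ i, n i ≤ m := by
    intro j
    have h1 : q ^ n j + ∑ i ∈ univ.erase j, q ^ n i = ∑ i, q ^ n i :=
      Finset.add_sum_erase _ (fun i => q ^ n i) (mem_univ j)
    have h2 : (univ.erase j).card * q ≤ ∑ i ∈ univ.erase j, q ^ n i := by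
      apply Finset.card_nsmul_le_sum
      intro x _
      calc q = q ^ 1 := (pow_one q).symm
        _ ≤ q ^ n x := Nat.pow_le_pow_right hq0 (hn1 x)
    have hcard : (univ.erase j).card = q := by
      rw [Finset.card_erase_of_mem (mem_univ j), Finset.card_univ, Fintype.card_fin]
      omega
    rw [hcard] at h2
    have hA : q ^ n j + q * q ≤ (q - 1) * q ^ m + 2 * q := by omega
    have h2q : 2 * q ≤ q * q := by nlinarith
    have hlt : q ^ n j < q ^ (m + 1) := by
      have hsmall : (q - 1) * q ^ m < q * q ^ m :=
        Nat.mul_lt_mul_of_lt_of_le (by omega) (le_refl _) hqm0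
      have hle : q ^ n j ≤ (q - 1) * q ^ m := by omega
      calc q ^ n j ≤ (q - 1) * q ^ m := hle
        _ < q * q ^ m := hsmall
        _ = q ^ (m + 1) := by ring
    have := (Nat.pow_lt_pow_iff_right hq1).mp hlt
    omega
  -- case m = 1
  by_cases hm' : m = 1
  · subst hm'
    left
    refine ⟨fun i _ => ?_, fun i _ => ?_⟩ <;> (have := hnm i; have := hn1 i; omega)
  have hm2 : 2 ≤ m := by omega
  -- split indices by n i = 1 or not
  set A : Finset (Fin (q+1)) := univ.filter (fun i => n i = 1) with hA
  set B : Finset (Fin (q+1)) := univ.filter (fun i => ¬ n i = 1) with hB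
  have hAB : A.card + B.card = q + 1 := by
    rw [hA, hB, Finset.card_filter_add_card_filter_not, Finset.card_univ,
      Fintype.card_fin]
  have hsplit : ∑ i ∈ A, q ^ n i + ∑ i ∈ B, q ^ n i = ∑ i, q ^ n i :=
    Finset.sum_filter_add_sum_filter_not _ _ _
  have hAsum : ∑ i ∈ A, q ^ n i = A.card * q := by
    have h1 : ∀ i ∈ A, q ^ n i = q := by
      intro i hi
      rw [hA, mem_filter] at hi
      rw [hi.2, pow_one]
    rw [Finset.sum_congr rfl h1, Finset.sum_const, smul_eq_mul]
  have hB2 : ∀ i ∈ B, 2 ≤ n i := by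
    intro i hi
    rw [hB, mem_filter] at hi
    have := hn1 i
    omega
  have hTdvd : q * q ∣ ∑ i ∈ B, q ^ n i := by
    apply Finset.dvd_sum
    intro i hi
    have h2 : q ^ 2 ∣ q ^ n i := pow_dvd_pow q (hB2 i hi)
    simpa [sq] using h2
  obtain ⟨t, ht⟩ := hTdvd
  obtain ⟨k, hk⟩ : q * q ∣ q ^ m := by
    have h2 : q ^ 2 ∣ q ^ m := pow_dvd_pow q hm2
    simpa [sq] using h2
  -- derive A.card % q = 2 % q
  have hmain : A.card * q + q * q * t = (q - 1) * (q * q * k) + 2 * q := by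
    have h := hsplit
    rw [hAsum, ht, hsum, hk] at h
    exact h
  have hcmod : A.card % q = 2 % q := by
    have h1 : q * (A.card + q * t) = q * ((q - 1) * (q * k) + 2) := by
      calc q * (A.card + q * t) = A.card * q + q * q * t := by ring
        _ = (q - 1) * (q * q * k) + 2 * q := hmain
        _ = q * ((q - 1) * (q * k) + 2) := by ring
    have h2 : A.card + q * t = (q - 1) * (q * k) + 2 :=
      Nat.eq_of_mul_eq_mul_left hq0 h1
    have h3 : (A.card : ℕ) ≡ 2 [MOD q] := by
      have e1 : A.card + q * t ≡ A.card [MOD q] := by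
        simpa using (Nat.ModEq.refl A.card).add (Nat.modEq_zero_iff_dvd.mpr ⟨t, rfl⟩)
      have e2 : (q - 1) * (q * k) + 2 ≡ 2 [MOD q] := by
        simpa using (Nat.modEq_zero_iff_dvd.mpr ⟨(q-1)*k, by ring⟩ :
          (q - 1) * (q * k) ≡ 0 [MOD q]).add (Nat.ModEq.refl 2)
      exact (e1.symm.trans (h2 ▸ e2 : A.card + q * t ≡ 2 [MOD q]))
    exact h3
  have hcle : A.card ≤ q + 1 := by omega
  by_cases hc2 : A.card = 2
  · -- main case: conclusion (1)
    left
    have hBcard : B.card = q - 1 := by omega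
    have hBsum : ∑ i ∈ B, q ^ n i = B.card * q ^ m := by
      have h := hsplit
      rw [hAsum, hsum, hc2] at h
      rw [hBcard]
      omega
    have hBm : ∀ i ∈ B, n i = m := by
      intro i hi
      have h1 : ∀ i ∈ B, q ^ n i ≤ q ^ m := fun i _ => Nat.pow_le_pow_right hq0 (hnm i)
      have h2 := sum_all_eq_of_le B (fun i => q ^ n i) (q ^ m) h1 hBsum i hi
      exact Nat.pow_right_injective hq2 h2
    have hdich : ∀ i, n i = 1 ∨ n i = m := by
      intro i
      by_cases h : n i = 1
      · exact Or.inl h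
      · exact Or.inr (hBm i (by rw [hB, mem_filter]; exact ⟨mem_univ i, h⟩))
    constructor
    · intro i hi
      rcases hdich i with h | h
      · exfalso
        have hsub : Finset.Ici i ⊆ A := by
          intro j hj
          rw [Finset.mem_Ici] at hj
          rw [hA, mem_filter]
          have := hanti hj
          have := hn1 j
          constructor
          · exact mem_univ j
          · omega
        have hcard := Finset.card_le_card hsub
        rw [Fin.card_Ici, hc2] at hcard
        omega
      · exact h
    · intro i hi
      rcases hdich i with h | h
      · exact h
      · exfalso
        have hsub : Finset.Iic i ⊆ B := by
          intro j hj
          rw [Finset.mem_Iic] at hj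
          rw [hB, mem_filter]
          have := hanti hj
          refine ⟨mem_univ j, by omega⟩
        have hcard := Finset.card_le_card hsub
        rw [Fin.card_Iic, hBcard] at hcard
        omega
  · -- q = 2, A.card = 0
    have hq2' : q = 2 := by
      by_contra hq3
      have hq3' : 3 ≤ q := by omega
      have h2q : 2 % q = 2 := Nat.mod_eq_of_lt (by omega)
      rw [h2q] at hcmod
      rcases Nat.lt_or_ge A.card q with h | h
      · rw [Nat.mod_eq_of_lt h] at hcmod; omega
      · have h1 : A.card - q < q := by omega
        rw [Nat.mod_eq_sub_mod h, Nat.mod_eq_of_lt h1] at hcmod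
        omega
    subst hq2'
    have hc0 : A.card = 0 := by
      have : 2 % 2 = 0 := rfl
      omega
    have hAe : A = ∅ := Finset.card_eq_zero.mp hc0
    have hge2 : ∀ i, 2 ≤ n i := by
      intro i
      by_contra h
      have h1 : n i = 1 := by have := hn1 i; omega
      have : i ∈ A := by rw [hA, mem_filter]; exact ⟨mem_univ i, h1⟩
      rw [hAe] at this
      exact absurd this (Finset.notMem_empty i)
    right
    refine ⟨rfl, ?_⟩
    -- now q = 2, Fin 3
    have hs3 : 2 ^ n 0 + 2 ^ n 1 + 2 ^ n 2 = 2 ^ m + 4 := by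
      have h3 := Fin.sum_univ_three (fun i => (2:ℕ) ^ n i)
      rw [hsum] at h3
      omega
    have h01 : n 1 ≤ n 0 := hanti (by decide)
    have h12 : n 2 ≤ n 1 := hanti (by decide)
    have ha4 : 4 ≤ 2 ^ n 2 := by
      calc (4:ℕ) = 2 ^ 2 := rfl
        _ ≤ 2 ^ n 2 := Nat.pow_le_pow_right (by omega) (hge2 2)
    have hb4 : 4 ≤ 2 ^ n 1 := le_trans ha4 (Nat.pow_le_pow_right (by omega) h12)
    have hc4 : 4 ≤ 2 ^ n 0 := le_trans hb4 (Nat.pow_le_pow_right (by omega) h01)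
    have hm3 : 3 ≤ m := by
      have h8 : 8 ≤ 2 ^ m := by omega
      have := (Nat.pow_le_pow_iff_right (a := 2) (by omega)).mp (by omega : 2 ^ 3 ≤ 2 ^ m)
      omega
    have hn2 : n 2 = 2 := by
      by_contra h
      have h3 : 3 ≤ n 2 := by have := hge2 2; omega
      have d0 : (8:ℕ) ∣ 2 ^ n 0 := by
        have : (2:ℕ) ^ 3 ∣ 2 ^ n 0 := pow_dvd_pow 2 (by omega)
        simpa using this
      have d1 : (8:ℕ) ∣ 2 ^ n 1 := by
        have : (2:ℕ) ^ 3 ∣ 2 ^ n 1 := pow_dvd_pow 2 (by omega)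
        simpa using this
      have d2 : (8:ℕ) ∣ 2 ^ n 2 := by
        have : (2:ℕ) ^ 3 ∣ 2 ^ n 2 := pow_dvd_pow 2 (by omega)
        simpa using this
      have dm : (8:ℕ) ∣ 2 ^ m := by
        have : (2:ℕ) ^ 3 ∣ 2 ^ m := pow_dvd_pow 2 hm3
        simpa using this
      omega
    have hab : 2 ^ n 0 + 2 ^ n 1 = 2 ^ m := by
      rw [hn2] at hs3
      omega
    have ham : n 0 < m := by
      have : 2 ^ n 0 < 2 ^ m := by omega
      exact (Nat.pow_lt_pow_iff_right (by omega)).mp this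
    have hbm : n 1 < m := by
      have : 2 ^ n 1 < 2 ^ m := by omega
      exact (Nat.pow_lt_pow_iff_right (by omega)).mp this
    have hm1' : m - 1 + 1 = m := by omega
    have hpow : 2 ^ (m - 1) + 2 ^ (m - 1) = 2 ^ m := by
      have h2 : 2 ^ (m - 1) * 2 = 2 ^ m := by
        rw [← pow_succ, hm1']
      omega
    have hale : 2 ^ n 0 ≤ 2 ^ (m - 1) := Nat.pow_le_pow_right (by omega) (by omega)
    have hble : 2 ^ n 1 ≤ 2 ^ (m - 1) := Nat.pow_le_pow_right (by omega) (by omega)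
    have haeq : n 0 = m - 1 :=
      Nat.pow_right_injective (le_refl 2) (by omega : 2 ^ n 0 = 2 ^ (m - 1))
    have hbeq : n 1 = m - 1 :=
      Nat.pow_right_injective (le_refl 2) (by omega : 2 ^ n 1 = 2 ^ (m - 1))
    constructor
    · intro i hi
      have hiv : (i : ℕ) = 0 ∨ (i : ℕ) = 1 := by omega
      rcases hiv with h | h
      · have : i = 0 := Fin.ext (by simpa using h)
        rw [this, haeq]
      · have : i = 1 := Fin.ext (by simpa using h)
        rw [this, hbeq]
    · intro i hi
      have : i = 2 := Fin.ext (by simpa using hi)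
      rw [this, hn2]


/-- block lengths of extremal 2-dimensional one-weight MSRD codes with
`q + 1` blocks: if nonzero `Fq`-subspaces `U 0, …, U q` of `Fqm²` with non-increasing
dimensions `n i ≥ 1` satisfy `∑ i dim_{Fq}(U i ∩ S) = 1` for every one-dimensional
`Fqm`-subspace `S`, then either the first `q − 1` dimensions equal `m` and the last two
equal `1`, or `q = 2` and the dimensions are `(m − 1, m − 1, 2)`. -/
theorem extremal_one_weight_MSRD_block_lengths
    (Fq Fqm : Type) [Field Fq] [Field Fqm] [Fintype Fq] [Fintype Fqm] [Algebra Fq Fqm]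
    (q m : ℕ) (hq : Fintype.card Fq = q) (hm : Module.finrank Fq Fqm = m) (hm1 : 1 ≤ m)
    (U : Fin (q + 1) → Submodule Fq (Fin 2 → Fqm)) (hU0 : ∀ i, U i ≠ ⊥)
    (n : Fin (q + 1) → ℕ) (hn : ∀ i, n i = Module.finrank Fq (U i))
    (hanti : Antitone n) (hn1 : ∀ i, 1 ≤ n i)
    (hscatt : ∀ S : Submodule Fqm (Fin 2 → Fqm), Module.finrank Fqm S = 1 →
      ∑ i, Module.finrank Fq ↥(U i ⊓ Submodule.restrictScalars Fq S) = 1) :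
    ((∀ i : Fin (q + 1), (i : ℕ) < q - 1 → n i = m) ∧
      (∀ i : Fin (q + 1), q - 1 ≤ (i : ℕ) → n i = 1))
    ∨ (q = 2 ∧
        (∀ i : Fin (q + 1), (i : ℕ) < 2 → n i = m - 1) ∧
        (∀ i : Fin (q + 1), (i : ℕ) = 2 → n i = 2)) := by
  classical
  have hq2 : 2 ≤ q := hq ▸ Fintype.one_lt_card
  set V := Fin 2 → Fqm with hV
  haveI : Finite (Submodule Fqm V) :=
    Finite.of_injective (fun S => (S : Set V)) SetLike.coe_injective
  haveI : Fintype (Submodule Fqm V) := Fintype.ofFinite _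
  set pts : Finset (Submodule Fqm V) :=
    Finset.univ.filter (fun S => Module.finrank Fqm ↥S = 1) with hpts
  set NZ : Set V → Finset V :=
    (fun W => Finset.univ.filter (fun v => v ∈ W ∧ v ≠ 0)) with hNZ
  -- cardinality of Fqm
  have hQ : Fintype.card Fqm = q ^ m := by
    rw [Module.card_eq_pow_finrank (K := Fq) (V := Fqm), hq, hm]
  -- fiberwise counting
  have hfiber : ∀ W : Set V,
      (NZ W).card = ∑ S ∈ pts, (NZ (W ∩ ↑S)).card := by
    intro W
    have hmaps : ∀ v ∈ NZ W, Submodule.span Fqm {v} ∈ pts := by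
      intro v hv
      simp only [hNZ, Finset.mem_filter] at hv
      simp only [hpts, Finset.mem_filter]
      exact ⟨Finset.mem_univ _, finrank_span_singleton hv.2.2⟩
    rw [Finset.card_eq_sum_card_fiberwise hmaps]
    apply Finset.sum_congr rfl
    intro S hS
    congr 1
    have hS1 : Module.finrank Fqm ↥S = 1 := by
      rw [hpts, Finset.mem_filter] at hS
      exact hS.2
    ext v
    simp only [hNZ, Finset.mem_filter, Finset.mem_univ, true_and, Set.mem_inter_iff,
      SetLike.mem_coe]
    constructor
    · rintro ⟨⟨hvW, hv0⟩, hsp⟩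
      exact ⟨⟨hvW, hsp ▸ Submodule.mem_span_singleton_self v⟩, hv0⟩
    · rintro ⟨⟨hvW, hvS⟩, hv0⟩
      refine ⟨⟨hvW, hv0⟩, ?_⟩
      apply Submodule.eq_of_le_of_finrank_eq
      · rw [Submodule.span_le]
        simpa using hvS
      · rw [finrank_span_singleton hv0, hS1]
  -- card of NZ of an Fq-submodule
  have hcardNZq : ∀ Wq : Submodule Fq V,
      (NZ ↑Wq).card + 1 = q ^ Module.finrank Fq ↥Wq := by
    intro Wq
    have h0 : (0:V) ∈ Finset.univ.filter (fun v => v ∈ (Wq : Set V)) := by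
      simp [Wq.zero_mem]
    have he : NZ ↑Wq = (Finset.univ.filter (fun v => v ∈ (Wq : Set V))).erase 0 := by
      ext v
      simp only [hNZ, Finset.mem_filter, Finset.mem_univ, true_and, Finset.mem_erase]
      tauto
    have hc : (Finset.univ.filter (fun v => v ∈ (Wq : Set V))).card = Fintype.card ↥Wq := by
      rw [Fintype.card_subtype]
      congr 1
    have hcard : Fintype.card ↥Wq = q ^ Module.finrank Fq ↥Wq := by
      rw [Module.card_eq_pow_finrank (K := Fq) (V := ↥Wq), hq]
    rw [he, Finset.card_erase_of_mem h0, hc, hcard]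
    have : 1 ≤ q ^ Module.finrank Fq ↥Wq := Nat.one_le_pow _ _ (by omega)
    omega
  -- card of NZ of a point
  have hcardNZS : ∀ S : Submodule Fqm V, S ∈ pts → (NZ ↑S).card + 1 = q ^ m := by
    intro S hS
    have hS1 : Module.finrank Fqm ↥S = 1 := by
      rw [hpts, Finset.mem_filter] at hS
      exact hS.2
    have h0 : (0:V) ∈ Finset.univ.filter (fun v => v ∈ (S : Set V)) := by
      simp [S.zero_mem]
    have he : NZ ↑S = (Finset.univ.filter (fun v => v ∈ (S : Set V))).erase 0 := by
      ext v
      simp only [hNZ, Finset.mem_filter, Finset.mem_univ, true_and, Finset.mem_erase]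
      tauto
    have hc : (Finset.univ.filter (fun v => v ∈ (S : Set V))).card = Fintype.card ↥S := by
      rw [Fintype.card_subtype]
      congr 1
    have hcard : Fintype.card ↥S = q ^ m := by
      rw [Module.card_eq_pow_finrank (K := Fqm) (V := ↥S), hS1, hQ, pow_one]
    rw [he, Finset.card_erase_of_mem h0, hc, hcard]
    have : 2 ≤ q ^ m := by
      calc 2 ≤ q := hq2
        _ = q ^ 1 := (pow_one q).symm
        _ ≤ q ^ m := Nat.pow_le_pow_right (by omega) hm1
    omega
  -- number of points
  have hVcard : Fintype.card V = q ^ m * q ^ m := by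
    show Fintype.card (Fin 2 → Fqm) = q ^ m * q ^ m
    rw [Fintype.card_fun, hQ, Fintype.card_fin]
    ring
  have hptscard : pts.card = q ^ m + 1 := by
    have htop := hfiber Set.univ
    have htopcard : (NZ Set.univ).card + 1 = q ^ m * q ^ m := by
      have he : NZ Set.univ = Finset.univ.erase 0 := by
        ext v
        simp [hNZ]
      rw [he, Finset.card_erase_of_mem (Finset.mem_univ 0), Finset.card_univ, hVcard]
      have : 1 ≤ q ^ m * q ^ m := Nat.one_le_iff_ne_zero.mpr (by positivity)
      omega
    have hsum2 : ∑ S ∈ pts, (NZ (Set.univ ∩ ↑S)).card = pts.card * (q ^ m - 1) := by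
      rw [Finset.sum_congr rfl (fun S hS => ?_), Finset.sum_const, smul_eq_mul]
      rw [Set.univ_inter]
      have := hcardNZS S hS
      omega
    rw [hsum2] at htop
    have hQ2 : 2 ≤ q ^ m := by
      calc 2 ≤ q := hq2
        _ = q ^ 1 := (pow_one q).symm
        _ ≤ q ^ m := Nat.pow_le_pow_right (by omega) hm1
    obtain ⟨p, hp⟩ : ∃ p, q ^ m = p + 2 := ⟨q ^ m - 2, by omega⟩
    rw [hp] at htop htopcard ⊢
    have hsub : p + 2 - 1 = p + 1 := by omega
    rw [hsub] at htop
    have hring : (p + 3) * (p + 1) + 1 = (p + 2) * (p + 2) := by ring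
    have h1 : pts.card * (p + 1) = (p + 3) * (p + 1) := by omega
    have h2 := Nat.eq_of_mul_eq_mul_right (show 0 < p + 1 by omega) h1
    omega
  -- per-block counting
  have hblock : ∀ i, q ^ n i = ∑ S ∈ pts,
      ((q - 1) * Module.finrank Fq ↥(U i ⊓ Submodule.restrictScalars Fq S)) + 1 := by
    intro i
    have h1 := hfiber ↑(U i)
    have h2 : ∀ S ∈ pts, (NZ (↑(U i) ∩ ↑S)).card
        = (q - 1) * Module.finrank Fq ↥(U i ⊓ Submodule.restrictScalars Fq S) := by
      intro S hS
      have hS1 : Module.finrank Fqm ↥S = 1 := by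
        rw [hpts, Finset.mem_filter] at hS
        exact hS.2
      have hd1 : Module.finrank Fq ↥(U i ⊓ Submodule.restrictScalars Fq S) ≤ 1 := by
        rw [← hscatt S hS1]
        exact Finset.single_le_sum
          (f := fun j => Module.finrank Fq ↥(U j ⊓ Submodule.restrictScalars Fq S))
          (fun j _ => Nat.zero_le _) (Finset.mem_univ i)
      have hco : (↑(U i) : Set V) ∩ ↑S = ↑(U i ⊓ Submodule.restrictScalars Fq S) := by
        rw [Submodule.coe_inf, Submodule.coe_restrictScalars]
      rw [hco]
      have hcc := hcardNZq (U i ⊓ Submodule.restrictScalars Fq S)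
      interval_cases hd : Module.finrank Fq ↥(U i ⊓ Submodule.restrictScalars Fq S)
      · simp only [pow_zero] at hcc
        omega
      · simp only [pow_one] at hcc
        omega
    rw [hn i, ← hcardNZq (U i), h1, Finset.sum_congr rfl h2]
  -- total
  have hswap : ∑ i, ∑ S ∈ pts,
      (q - 1) * Module.finrank Fq ↥(U i ⊓ Submodule.restrictScalars Fq S)
      = pts.card * (q - 1) := by
    rw [Finset.sum_comm]
    have hper : ∀ S ∈ pts, ∑ i,
        (q - 1) * Module.finrank Fq ↥(U i ⊓ Submodule.restrictScalars Fq S) = q - 1 := by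
      intro S hS
      have hS1 : Module.finrank Fqm ↥S = 1 := by
        rw [hpts, Finset.mem_filter] at hS
        exact hS.2
      rw [← Finset.mul_sum, hscatt S hS1, mul_one]
    rw [Finset.sum_congr rfl hper, Finset.sum_const, smul_eq_mul]
  have htotal : ∑ i, q ^ n i = pts.card * (q - 1) + (q + 1) := by
    rw [Finset.sum_congr rfl (fun i _ => hblock i), Finset.sum_add_distrib, hswap,
      Finset.sum_const, smul_eq_mul, Finset.card_univ, Fintype.card_fin, mul_one]
  exact arith_main q m hq2 hm1 n hanti hn1 (by rw [htotal, hptscard])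
end

section
/- Let σ be a generator of Gal(𝔽_{q^m}/𝔽_q), let t ≥ 1, and let a_1,…,a_t ∈ 𝔽_{q^m}^* have pairwise distinct norms N_{q^m/q}(a_i). Let η ∈ 𝔽_{q^m} be such that N_{q^m/q}(η) does not belong to the subgroup of 𝔽_q^* generated by N_{q^m/q}(a_1),…,N_{q^m/q}(a_t). For i ∈ {1,…,t} set U_i = { (y + η·a_i·σ(a_i)·σ²(y), a_i·σ(y)) : y ∈ 𝔽_{q^m} } ⊆ 𝔽_{q^m}². Then Σ_{i=1}^t dim_{𝔽_q}(U_i ∩ S) ≤ 1 for every one-dimensional 𝔽_{q^m}-subspace S of 𝔽_{q^m}²; that is, the multi-linear set associated with (U_1,…,U_t) is scattered. -/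
open Module Finset

section Aux

variable {Fq Fqm : Type} [Field Fq] [Field Fqm] [Algebra Fq Fqm]

private lemma tlrsN_mul (σ : Fqm ≃ₐ[Fq] Fqm) (m : ℕ) (x y : Fqm) :
    (∏ l ∈ Finset.range m, (σ ^ l) (x * y))
      = (∏ l ∈ Finset.range m, (σ ^ l) x) * (∏ l ∈ Finset.range m, (σ ^ l) y) := by
  simp [map_mul, Finset.prod_mul_distrib]

private lemma tlrsN_ne_zero (σ : Fqm ≃ₐ[Fq] Fqm) (m : ℕ) {x : Fqm} (hx : x ≠ 0) :
    (∏ l ∈ Finset.range m, (σ ^ l) x) ≠ 0 :=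
  Finset.prod_ne_zero_iff.mpr fun l _ h => hx ((σ ^ l).injective (by rw [map_zero]; exact h))

private lemma tlrsN_one (σ : Fqm ≃ₐ[Fq] Fqm) (m : ℕ) :
    (∏ l ∈ Finset.range m, (σ ^ l) (1 : Fqm)) = 1 := by simp

private lemma tlrsN_sigma (σ : Fqm ≃ₐ[Fq] Fqm) (m : ℕ) (hpow : σ ^ m = 1) (x : Fqm) :
    (∏ l ∈ Finset.range m, (σ ^ l) (σ x)) = ∏ l ∈ Finset.range m, (σ ^ l) x := by
  by_cases hx : x = 0
  · subst hx; simp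
  have h1 : (∏ l ∈ Finset.range m, (σ ^ l) (σ x)) * x
      = (∏ l ∈ Finset.range m, (σ ^ l) x) * x := by
    have e1 : ∀ l : ℕ, (σ ^ l) (σ x) = (σ ^ (l + 1)) x := fun l => by
      rw [pow_succ, AlgEquiv.mul_apply]
    calc (∏ l ∈ Finset.range m, (σ ^ l) (σ x)) * x
        = ∏ l ∈ Finset.range (m + 1), (σ ^ l) x := by
          rw [Finset.prod_range_succ']
          simp [e1]
      _ = (∏ l ∈ Finset.range m, (σ ^ l) x) * (σ ^ m) x := Finset.prod_range_succ _ _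
      _ = (∏ l ∈ Finset.range m, (σ ^ l) x) * x := by rw [hpow]; simp
  exact mul_right_cancel₀ hx h1

private lemma tlrsN_inv_mul (σ : Fqm ≃ₐ[Fq] Fqm) (m : ℕ) {x : Fqm} (hx : x ≠ 0) :
    (∏ l ∈ Finset.range m, (σ ^ l) x) * (∏ l ∈ Finset.range m, (σ ^ l) x⁻¹) = 1 := by
  rw [← tlrsN_mul, mul_inv_cancel₀ hx, tlrsN_one]

/-- the core identity: two distinct solutions of `1 + η σ(c) c = λ c` force
`N(η) N(c) N(e) = 1`. -/
private lemma tlrs_key (σ : Fqm ≃ₐ[Fq] Fqm) (m : ℕ) (hpow : σ ^ m = 1)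
    {η lam c e : Fqm} (hne : c ≠ e)
    (hc : 1 + η * (σ c * c) = lam * c) (he : 1 + η * (σ e * e) = lam * e) :
    (∏ l ∈ Finset.range m, (σ ^ l) η) * (∏ l ∈ Finset.range m, (σ ^ l) c)
      * (∏ l ∈ Finset.range m, (σ ^ l) e) = 1 := by
  have hd : c - e = η * (c * (e * σ (c - e))) := by
    rw [map_sub]; linear_combination c * he - e * hc
  have hd0 : c - e ≠ 0 := sub_ne_zero.mpr hne
  have hNd := tlrsN_ne_zero σ m hd0
  have h2 := congrArg (fun z => ∏ l ∈ Finset.range m, (σ ^ l) z) hd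
  simp only [tlrsN_mul, tlrsN_sigma σ m hpow] at h2
  -- h2 : N (c-e) = N η * (N c * (N e * N (c - e)))
  apply mul_right_cancel₀ hNd
  rw [one_mul]; linear_combination -h2

private lemma tlrs_sum_cases {t : ℕ} (f : Fin t → ℕ) (h : 2 ≤ ∑ i, f i) :
    (∃ i, 2 ≤ f i) ∨ ∃ i j, i ≠ j ∧ 1 ≤ f i ∧ 1 ≤ f j := by
  by_contra hcon
  push_neg at hcon
  obtain ⟨h1, h2⟩ := hcon
  rcases em (∃ i, 1 ≤ f i) with ⟨i, hi⟩ | hno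
  · have hz : ∀ j, j ≠ i → f j = 0 := fun j hj => by
      have := h2 j i
      rcases em (1 ≤ f j) with hj1 | hj1
      · have := h2 i j (Ne.symm hj) hi; omega
      · omega
    rw [Finset.sum_eq_single i (fun j _ hj => hz j hj) (by simp)] at h
    have := h1 i; omega
  · push_neg at hno
    have hz : ∑ i, f i = 0 := Finset.sum_eq_zero fun i _ => by have := hno i; omega
    omega

end Aux

/-- The `Fq`-linear map `y ↦ (y + η·a·σ(a)·σ²(y), a·σ(y))` from `Fqm` to `Fqm²`
(the generic block map of a twisted linearized Reed–Solomon code). -/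
noncomputable def twMap (Fq Fqm : Type) [Field Fq] [Field Fqm] [Algebra Fq Fqm]
    (σ : Fqm ≃ₐ[Fq] Fqm) (η a : Fqm) : Fqm →ₗ[Fq] (Fin 2 → Fqm) where
  toFun y := fun j => if j = 0 then y + η * (a * σ a) * σ (σ y) else a * σ y
  map_add' x y := by
    funext j
    by_cases h : j = 0 <;> simp only [Pi.add_apply, if_pos, if_neg, h, if_true, ite_true] <;>
      simp [map_add, mul_add] <;> ring
  map_smul' c x := by
    funext j
    by_cases h : j = 0 <;>
      simp [h, _root_.map_smul, mul_smul_comm, smul_add]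

/-- the multi-linear set of a twisted linearized Reed–Solomon code is
scattered: if the `a i` have pairwise distinct norms and `N(η)` is not in the subgroup of
`𝔽_q^*` generated by the `N(a i)`, then the subspaces
`U i = {(y + η aᵢ σ(aᵢ) σ²(y), aᵢ σ(y)) : y ∈ Fqm}` satisfy
`∑ i dim_{Fq}(U i ∩ S) ≤ 1` for every one-dimensional `Fqm`-subspace `S` of `Fqm²`. -/
theorem twistedLRS_scattered
    (Fq Fqm : Type) [Field Fq] [Field Fqm] [Fintype Fq] [Fintype Fqm] [Algebra Fq Fqm]
    (m : ℕ) (hm : Module.finrank Fq Fqm = m)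
    (σ : Fqm ≃ₐ[Fq] Fqm) (hσ : ∀ τ : Fqm ≃ₐ[Fq] Fqm, τ ∈ Subgroup.zpowers σ)
    (t : ℕ) (ht : 1 ≤ t)
    (a : Fin t → Fqm) (ha0 : ∀ i, a i ≠ 0)
    (hnorm : ∀ i j : Fin t,
      (∏ l ∈ Finset.range m, (σ ^ l) (a i)) = (∏ l ∈ Finset.range m, (σ ^ l) (a j)) → i = j)
    (η : Fqm)
    (hη : ∀ f : Fin t → ℤ,
      (∏ l ∈ Finset.range m, (σ ^ l) η)
        ≠ ∏ i, (∏ l ∈ Finset.range m, (σ ^ l) (a i)) ^ (f i))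
    (S : Submodule Fqm (Fin 2 → Fqm)) (hS : Module.finrank Fqm S = 1) :
    ∑ i, Module.finrank Fq
        ↥((⊤ : Submodule Fq Fqm).map (twMap Fq Fqm σ η (a i))
          ⊓ Submodule.restrictScalars Fq S) ≤ 1 := by
  classical
  -- notation for the norm
  set N : Fqm → Fqm := fun x => ∏ l ∈ Finset.range m, (σ ^ l) x with hNdef
  -- σ ^ m = 1
  have hpow : σ ^ m = 1 := by
    have hd : orderOf σ ∣ m := by
      rw [← hm, ← IsGalois.card_aut_eq_finrank Fq Fqm]
      exact orderOf_dvd_natCard σ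
    exact orderOf_dvd_iff_pow_eq_one.mp hd
  -- fixed points of σ are in the image of Fq
  have hfix : ∀ x : Fqm, σ x = x → ∃ r : Fq, algebraMap Fq Fqm r = x := by
    intro x hx
    have hall : ∀ τ : Fqm ≃ₐ[Fq] Fqm, τ x = x := by
      intro τ
      obtain ⟨k, hk⟩ := hσ τ
      have hinv : σ⁻¹ x = x := by
        conv_lhs => rw [← hx]
        exact σ.symm_apply_apply x
      have hn : ∀ n : ℕ, (σ ^ n) x = x := by
        intro n; induction n with
        | zero => simp
        | succ n ih => rw [pow_succ, AlgEquiv.mul_apply, hx, ih]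
      have hni : ∀ n : ℕ, (σ⁻¹ ^ n) x = x := by
        intro n; induction n with
        | zero => simp
        | succ n ih => rw [pow_succ, AlgEquiv.mul_apply, hinv, ih]
      rcases k with k | k
      · rw [← hk]; simpa using hn k
      · rw [← hk]; simp only []; rw [zpow_negSucc, ← inv_pow]; exact hni (k + 1)
    have hb : x ∈ (⊥ : IntermediateField Fq Fqm) := by
      have h1 : x ∈ IntermediateField.fixedField (⊤ : Subgroup (Fqm ≃ₐ[Fq] Fqm)) :=
        fun g => hall g
      rwa [← IntermediateField.fixingSubgroup_bot,
        IsGalois.fixedField_fixingSubgroup] at h1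
    exact IntermediateField.mem_bot.mp hb
  set tw : Fin t → (Fqm →ₗ[Fq] (Fin 2 → Fqm)) := fun i => twMap Fq Fqm σ η (a i) with htwdef
  have htw0 : ∀ i (y : Fqm), tw i y 0 = y + η * (a i * σ (a i)) * σ (σ y) := fun i y => rfl
  have htw1 : ∀ i (y : Fqm), tw i y 1 = a i * σ y := fun i y => rfl
  have hinj : ∀ i, Function.Injective (tw i) := by
    intro i x y hxy
    have h1 := congrFun hxy 1
    rw [htw1, htw1] at h1
    field_simp [ha0 i] at h1
    exact σ.injective h1
  set K : Fin t → Submodule Fq Fqm :=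
    fun i => (Submodule.restrictScalars Fq S).comap (tw i) with hKdef
  have hfr : ∀ i, Module.finrank Fq
      ↥((⊤ : Submodule Fq Fqm).map (twMap Fq Fqm σ η (a i)) ⊓ Submodule.restrictScalars Fq S)
      = Module.finrank Fq (K i) := by
    intro i
    have h1 : (K i).map (tw i)
        = (⊤ : Submodule Fq Fqm).map (tw i) ⊓ Submodule.restrictScalars Fq S := by
      rw [hKdef, Submodule.map_comap_eq, LinearMap.range_eq_map]
    rw [show (⊤ : Submodule Fq Fqm).map (twMap Fq Fqm σ η (a i)) = (⊤ : Submodule Fq Fqm).map (tw i) from rfl, ← h1]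
    exact (LinearEquiv.finrank_eq (Submodule.equivMapOfInjective (tw i) (hinj i) (K i))).symm
  rw [Finset.sum_congr rfl fun i _ => hfr i]
  -- a spanning vector of S
  obtain ⟨v, hv0, hv⟩ := finrank_eq_one_iff'.mp hS
  set u : Fin 2 → Fqm := (v : Fin 2 → Fqm) with hudef
  have hmemS : ∀ w : Fin 2 → Fqm, w ∈ S → ∃ μ : Fqm, μ • u = w := by
    intro w hw
    obtain ⟨μ, hμ⟩ := hv ⟨w, hw⟩
    exact ⟨μ, by simpa [hudef] using congrArg Subtype.val hμ⟩
  by_cases hu1 : u 1 = 0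
  · -- the point is ⟨(1,0)⟩ : all intersections are trivial
    have hbot : ∀ i, K i = ⊥ := by
      intro i
      rw [Submodule.eq_bot_iff]
      intro y hy
      have hyS : tw i y ∈ S := hy
      obtain ⟨μ, hμ⟩ := hmemS _ hyS
      have h1 := congrFun hμ 1
      rw [Pi.smul_apply, smul_eq_mul, htw1, hu1, mul_zero] at h1
      have : σ y = 0 := by
        rcases mul_eq_zero.mp h1.symm with h | h
        · exact absurd h (ha0 i)
        · exact h
      simpa using σ.injective (by simpa using this)
    have hz : ∀ i : Fin t, Module.finrank Fq (K i) = 0 := fun i => by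
      rw [hbot i]; exact finrank_bot Fq Fqm
    simp [hz]
  · -- normalize : S = ⟨(lam, 1)⟩
    set lam : Fqm := u 0 / u 1 with hlamdef
    -- every nonzero y in K i gives a solution c with N c = N (a i)
    have hsol : ∀ i (y : Fqm), y ∈ K i → y ≠ 0 →
        1 + η * (σ (a i * σ y * y⁻¹) * (a i * σ y * y⁻¹)) = lam * (a i * σ y * y⁻¹) := by
      intro i y hy hy0
      have hyS : tw i y ∈ S := hy
      obtain ⟨μ, hμ⟩ := hmemS _ hyS
      have h0 := congrFun hμ 0
      have h1 := congrFun hμ 1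
      rw [Pi.smul_apply, smul_eq_mul, htw0] at h0
      rw [Pi.smul_apply, smul_eq_mul, htw1] at h1
      have hEq : u 1 * (y + η * (a i * σ (a i)) * σ (σ y)) = u 0 * (a i * σ y) := by
        linear_combination u 0 * h1 - u 1 * h0
      have hsy : σ y ≠ 0 := fun h => hy0 (by simpa using σ.injective (by simpa using h))
      rw [map_mul, map_mul, map_inv₀, hlamdef]
      field_simp
      linear_combination hEq
    have hc0 : ∀ i (y : Fqm), y ≠ 0 → a i * σ y * y⁻¹ ≠ 0 := by
      intro i y hy0
      have hsy : σ y ≠ 0 := fun h => hy0 (by simpa using σ.injective (by simpa using h))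
      exact mul_ne_zero (mul_ne_zero (ha0 i) hsy) (inv_ne_zero hy0)
    have hNc : ∀ i (y : Fqm), y ≠ 0 → N (a i * σ y * y⁻¹) = N (a i) := by
      intro i y hy0
      have hsy : σ y ≠ 0 := fun h => hy0 (by simpa using σ.injective (by simpa using h))
      show (∏ l ∈ Finset.range m, (σ ^ l) (a i * σ y * y⁻¹)) = _
      rw [tlrsN_mul, tlrsN_mul, tlrsN_sigma σ m hpow, mul_assoc,
        tlrsN_inv_mul σ m hy0, mul_one]
    -- now the counting argument
    by_contra hcon
    push_neg at hcon
    have h2 : 2 ≤ ∑ i, Module.finrank Fq (K i) := hcon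
    have hNa0 : ∀ i, N (a i) ≠ 0 := fun i => tlrsN_ne_zero σ m (ha0 i)
    rcases tlrs_sum_cases _ h2 with ⟨i, hi⟩ | ⟨i, j, hij, hi, hj⟩
    · -- case A : one subspace intersects in dimension ≥ 2
      have hKnb : K i ≠ ⊥ := by
        intro hb; rw [hb] at hi; simp at hi
      obtain ⟨y₁, hy₁K, hy₁0⟩ := Submodule.exists_mem_ne_zero_of_ne_bot hKnb
      have hnle : ¬ K i ≤ Submodule.span Fq {y₁} := by
        intro hle
        have hmono := Submodule.finrank_mono hle
        rw [finrank_span_singleton hy₁0] at hmono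
        omega
      obtain ⟨y₂, hy₂K, hy₂ns⟩ := SetLike.not_le_iff_exists.mp hnle
      have hy₂0 : y₂ ≠ 0 := fun h => hy₂ns (h ▸ Submodule.zero_mem _)
      by_cases hcc : a i * σ y₁ * y₁⁻¹ = a i * σ y₂ * y₂⁻¹
      · -- then y₂ is an Fq-multiple of y₁, contradiction
        have hs : σ (y₂ * y₁⁻¹) = y₂ * y₁⁻¹ := by
          rw [map_mul, map_inv₀]
          have hsy₁ : σ y₁ ≠ 0 := fun h => hy₁0 (by simpa using σ.injective (by simpa using h))
          have hsy₂ : σ y₂ ≠ 0 := fun h => hy₂0 (by simpa using σ.injective (by simpa using h))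
          have h := hcc
          field_simp at h
          field_simp
          have h' : σ y₁ * y₂ = σ y₂ * y₁ := mul_left_cancel₀ (ha0 i) (by linear_combination h)
          linear_combination -h'
        obtain ⟨r, hr⟩ := hfix _ hs
        apply hy₂ns
        rw [Submodule.mem_span_singleton]
        refine ⟨r, ?_⟩
        rw [Algebra.smul_def, hr]
        field_simp
      · have hkey := tlrs_key σ m hpow hcc (hsol i y₁ hy₁K hy₁0) (hsol i y₂ hy₂K hy₂0)
        have hNc₁ := hNc i y₁ hy₁0
        have hNc₂ := hNc i y₂ hy₂0
        rw [hNdef] at hNc₁ hNc₂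
        simp only at hNc₁ hNc₂
        rw [hNc₁, hNc₂] at hkey
        -- N η * N (a i) * N (a i) = 1 contradicts hη with f = -2 δ_i
        apply hη fun k => if k = i then -2 else 0
        have hprod : (∏ k, (∏ l ∈ Finset.range m, (σ ^ l) (a k)) ^ (if k = i then (-2:ℤ) else 0))
            = ((∏ l ∈ Finset.range m, (σ ^ l) (a i)) * (∏ l ∈ Finset.range m, (σ ^ l) (a i)))⁻¹ := by
          rw [Finset.prod_congr rfl (fun k _ => show
              (∏ l ∈ Finset.range m, (σ ^ l) (a k)) ^ (if k = i then (-2:ℤ) else 0)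
              = if k = i then ((∏ l ∈ Finset.range m, (σ ^ l) (a i))
                  * (∏ l ∈ Finset.range m, (σ ^ l) (a i)))⁻¹ else 1 by
            by_cases h : k = i
            · subst h
              rw [if_pos rfl, if_pos rfl, show (-2:ℤ) = (-1) + (-1) by norm_num,
                zpow_add₀ (hNa0 k), zpow_neg_one, mul_inv]
            · rw [if_neg h, if_neg h, zpow_zero]), Finset.prod_ite_eq' Finset.univ i]
          simp
        rw [hprod]
        refine (inv_eq_of_mul_eq_one_right ?_).symm
        linear_combination hkey
    · -- case B : two distinct subspaces intersect nontrivially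
      have hKnbi : K i ≠ ⊥ := fun hb => by rw [hb] at hi; simp at hi
      have hKnbj : K j ≠ ⊥ := fun hb => by rw [hb] at hj; simp at hj
      obtain ⟨y, hyK, hy0⟩ := Submodule.exists_mem_ne_zero_of_ne_bot hKnbi
      obtain ⟨z, hzK, hz0⟩ := Submodule.exists_mem_ne_zero_of_ne_bot hKnbj
      have hNce : N (a i * σ y * y⁻¹) = N (a i) := hNc i y hy0
      have hNee : N (a j * σ z * z⁻¹) = N (a j) := hNc j z hz0
      by_cases hcc : a i * σ y * y⁻¹ = a j * σ z * z⁻¹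
      · -- equal norms, contradiction with hnorm
        have : N (a i) = N (a j) := by rw [← hNce, hcc, hNee]
        rw [hNdef] at this
        simp only at this
        exact hij (hnorm i j this)
      · have hkey := tlrs_key σ m hpow hcc (hsol i y hyK hy0) (hsol j z hzK hz0)
        have hNce' := hNce; have hNee' := hNee
        rw [hNdef] at hNce' hNee'
        simp only at hNce' hNee'
        rw [hNce', hNee'] at hkey
        apply hη fun k => (if k = i then (-1:ℤ) else 0) + (if k = j then (-1:ℤ) else 0)
        have hsplit : ∀ k : Fin t,
            (∏ l ∈ Finset.range m, (σ ^ l) (a k)) ^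
              ((if k = i then (-1:ℤ) else 0) + (if k = j then (-1:ℤ) else 0))
            = (∏ l ∈ Finset.range m, (σ ^ l) (a k)) ^ (if k = i then (-1:ℤ) else 0)
              * (∏ l ∈ Finset.range m, (σ ^ l) (a k)) ^ (if k = j then (-1:ℤ) else 0) :=
          fun k => zpow_add₀ (hNa0 k) _ _
        rw [Finset.prod_congr rfl fun k _ => hsplit k, Finset.prod_mul_distrib]
        have e1 : (∏ k, (∏ l ∈ Finset.range m, (σ ^ l) (a k)) ^ (if k = i then (-1:ℤ) else 0))
            = (∏ l ∈ Finset.range m, (σ ^ l) (a i))⁻¹ := by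
          rw [Finset.prod_congr rfl (fun k _ => show
              (∏ l ∈ Finset.range m, (σ ^ l) (a k)) ^ (if k = i then (-1:ℤ) else 0)
              = if k = i then (∏ l ∈ Finset.range m, (σ ^ l) (a i))⁻¹ else 1 by
            by_cases h : k = i
            · subst h; rw [if_pos rfl, if_pos rfl, zpow_neg_one]
            · rw [if_neg h, if_neg h, zpow_zero]), Finset.prod_ite_eq' Finset.univ i]
          simp
        have e2 : (∏ k, (∏ l ∈ Finset.range m, (σ ^ l) (a k)) ^ (if k = j then (-1:ℤ) else 0))
            = (∏ l ∈ Finset.range m, (σ ^ l) (a j))⁻¹ := by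
          rw [Finset.prod_congr rfl (fun k _ => show
              (∏ l ∈ Finset.range m, (σ ^ l) (a k)) ^ (if k = j then (-1:ℤ) else 0)
              = if k = j then (∏ l ∈ Finset.range m, (σ ^ l) (a j))⁻¹ else 1 by
            by_cases h : k = j
            · subst h; rw [if_pos rfl, if_pos rfl, zpow_neg_one]
            · rw [if_neg h, if_neg h, zpow_zero]), Finset.prod_ite_eq' Finset.univ j]
          simp
        rw [e1, e2, ← mul_inv]
        refine (inv_eq_of_mul_eq_one_right ?_).symm
        linear_combination hkey
end
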